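/- With notation as above, for integer vectors x ∈ Z^k the automorphism Θ_F^x of D_F U equals conjugation by f^x = f_1^{x_1}···f_k^{x_k}, i.e. Θ_F^x(u) = f^x u f^{−x}. -/

import Mathlib

/-- Generalized binomial coefficient `C(x,i) = x(x-1)⋯(x-i+1)/i!`. -/
noncomputable def genBinom (x : ℂ) (i : ℕ) : ℂ :=
  (∏ j ∈ Finset.range i, (x - (j : ℂ))) / (i.factorial : ℂ)

/-- `ad g : u ↦ g*u - u*g` as a ℂ-linear endomorphism. -/
noncomputable def adE {L : Type*} [Ring L] [Algebra ℂ L] (g : L) : Module.End ℂ L :=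
  LinearMap.mulLeft ℂ g - LinearMap.mulRight ℂ g

/-- Iterated adjoint action `ad(f 1)^{m 1} ⋯ ad(f k)^{m k}` for a multi-index `m`. -/
noncomputable def multiAd {L : Type*} [Ring L] [Algebra ℂ L] {k : ℕ}
    (f : Fin k → Lˣ) (m : Fin k → ℕ) : Module.End ℂ L :=
  (List.ofFn fun i => (adE ((f i : L))) ^ (m i)).prod

/-- `f 1 ^ (-m 1) ⋯ f k ^ (-m k)`. -/
noncomputable def invPow {L : Type*} [Ring L] [Algebra ℂ L] {k : ℕ}
    (f : Fin k → Lˣ) (m : Fin k → ℕ) : L :=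
  (List.ofFn fun i => ((((f i)⁻¹ : Lˣ) : L)) ^ (m i)).prod

/-- The truncation (up to multi-indices `< N`) of the defining sum
`Θ_F^x(u) = Σ C(x_1,i_1)⋯C(x_k,i_k) ad(f_1)^{i_1}⋯ad(f_k)^{i_k}(u) f^{-i}`. -/
noncomputable def thetaSum {L : Type*} [Ring L] [Algebra ℂ L] {k : ℕ}
    (f : Fin k → Lˣ) (x : Fin k → ℂ) (N : ℕ) (u : L) : L :=
  ∑ m ∈ Fintype.piFinset (fun _ : Fin k => Finset.range N),
    (∏ i, genBinom (x i) (m i)) • (multiAd f m u * invPow f m)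

lemma genBinom_zero_right (x : ℂ) : genBinom x 0 = 1 := by simp [genBinom]

lemma genBinom_zero_left {m : ℕ} (hm : m ≠ 0) : genBinom 0 m = 0 := by
  have : (0 : ℂ) - ((0:ℕ) : ℂ) = 0 := by simp
  simp only [genBinom]
  rw [Finset.prod_eq_zero (Finset.mem_range.mpr (Nat.pos_of_ne_zero hm)) this, zero_div]

lemma genBinom_pascal (y : ℂ) (m : ℕ) :
    genBinom (y + 1) (m + 1) = genBinom y (m + 1) + genBinom y m := by
  have h1 : ∏ j ∈ Finset.range (m + 1), (y + 1 - (j : ℂ))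
      = (∏ j ∈ Finset.range m, (y - (j : ℂ))) * (y + 1) := by
    rw [Finset.prod_range_succ']
    congr 1
    · exact Finset.prod_congr rfl fun j _ => by push_cast; ring
    · simp
  have h2 : ∏ j ∈ Finset.range (m + 1), (y - (j : ℂ))
      = (∏ j ∈ Finset.range m, (y - (j : ℂ))) * (y - m) := Finset.prod_range_succ _ _
  have hf : ((m + 1).factorial : ℂ) = (m + 1) * (m.factorial : ℂ) := by
    rw [Nat.factorial_succ]; push_cast; ring
  have hm0 : ((m.factorial : ℕ) : ℂ) ≠ 0 := Nat.cast_ne_zero.mpr m.factorial_ne_zero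
  have hm1 : ((m : ℂ) + 1) ≠ 0 := by
    have := Nat.cast_ne_zero (R := ℂ).mpr (Nat.succ_ne_zero m)
    push_cast at this; exact this
  simp only [genBinom, h1, h2, hf]
  field_simp
  ring

lemma adE_apply {L : Type*} [Ring L] [Algebra ℂ L] (g u : L) :
    adE g u = g * u - u * g := rfl

lemma adE_mul_right {L : Type*} [Ring L] [Algebra ℂ L] {g w : L} (hw : Commute g w)
    (v : L) : adE g (v * w) = adE g v * w := by
  simp only [adE_apply, sub_mul, mul_assoc, ← hw.eq]

lemma adE_pow_mul_right {L : Type*} [Ring L] [Algebra ℂ L] {g w : L} (hw : Commute g w)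
    (n : ℕ) (v : L) : ((adE g) ^ n) (v * w) = ((adE g) ^ n) v * w := by
  induction n with
  | zero => simp
  | succ n ih => rw [pow_succ', Module.End.mul_apply, Module.End.mul_apply, ih, adE_mul_right hw]

lemma adE_mul_left {L : Type*} [Ring L] [Algebra ℂ L] {g c : L} (hc : Commute g c)
    (v : L) : adE g (c * v) = c * adE g v := by
  simp only [adE_apply, mul_sub, ← mul_assoc, ← hc.eq]

lemma adE_pow_mul_left {L : Type*} [Ring L] [Algebra ℂ L] {g c : L} (hc : Commute g c)
    (n : ℕ) (v : L) : ((adE g) ^ n) (c * v) = c * ((adE g) ^ n) v := by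
  induction n with
  | zero => simp
  | succ n ih => rw [pow_succ', Module.End.mul_apply, Module.End.mul_apply, ih, adE_mul_left hc]

section
variable {L : Type*} [Ring L] [Algebra ℂ L]

lemma onevar (g : Lˣ) (N : ℕ) (v : L)
    (h : ((adE (g : L)) ^ N) v = 0) (x : ℤ) :
    ∑ m ∈ Finset.range N,
        genBinom ((x : ℤ) : ℂ) m • (((adE ((g : L))) ^ m) v * (((g⁻¹ : Lˣ) : L)) ^ m)
      = ((g ^ x : Lˣ) : L) * v * (((g ^ x)⁻¹ : Lˣ) : L) := by
  set gi : L := ((g⁻¹ : Lˣ) : L) with hgi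
  set a : ℕ → L := fun m => ((adE ((g : L))) ^ m) v * gi ^ m with ha
  have hgig : Commute (g : L) gi := by
    have h1 : (g : L) * gi = 1 := Units.mul_inv g
    have h2 : gi * (g : L) = 1 := Units.inv_mul g
    exact (h1.trans h2.symm)
  have haN : a N = 0 := by simp [ha, h]
  have conj_a : ∀ m, (g : L) * a m * gi = a m + a (m + 1) := by
    intro m
    have hw : Commute (g : L) (gi ^ m) := hgig.pow_right m
    have h1 : (g : L) * a m = a m * (g : L) + adE (g : L) (a m) := by
      rw [adE_apply]; abel
    have h2 : adE (g : L) (a m) = ((adE ((g : L))) ^ (m + 1)) v * gi ^ m := by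
      rw [ha]
      simp only []
      rw [adE_mul_right hw, pow_succ', Module.End.mul_apply]
    rw [h1, add_mul, mul_assoc, Units.mul_inv, mul_one, h2, mul_assoc, ← pow_succ]
  have shift : ∀ y : ℂ,
      ∑ m ∈ Finset.range N, genBinom (y + 1) m • a m
        = (g : L) * (∑ m ∈ Finset.range N, genBinom y m • a m) * gi := by
    intro y
    have rhs_eq : (g : L) * (∑ m ∈ Finset.range N, genBinom y m • a m) * gi
        = ∑ m ∈ Finset.range N, (genBinom y m • a m + genBinom y m • a (m + 1)) := by
      rw [Finset.mul_sum, Finset.sum_mul]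
      refine Finset.sum_congr rfl fun m _ => ?_
      rw [mul_smul_comm, smul_mul_assoc, conj_a m, smul_add]
    rw [rhs_eq]
    cases N with
    | zero => simp
    | succ n =>
      rw [Finset.sum_range_succ' (fun m => genBinom (y + 1) m • a m) n]
      rw [Finset.sum_add_distrib, Finset.sum_range_succ' (fun m => genBinom y m • a m) n,
        Finset.sum_range_succ (fun m => genBinom y m • a (m + 1)) n]
      have : a (n + 1) = 0 := haN
      rw [this, smul_zero, add_zero, genBinom_zero_right, genBinom_zero_right]
      simp only [genBinom_pascal, add_smul]
      rw [Finset.sum_add_distrib]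
      abel
  induction x using Int.induction_on with
  | zero =>
    cases N with
    | zero =>
      have hv : v = 0 := by simpa using h
      simp [hv]
    | succ n =>
      rw [Finset.sum_eq_single_of_mem 0 (Finset.mem_range.mpr n.succ_pos)
        (fun m _ hm => by rw [show ((0:ℤ):ℂ) = 0 by norm_num, genBinom_zero_left hm, zero_smul])]
      simp [genBinom_zero_right]
  | succ n ih =>
    have key := shift ((n : ℤ) : ℂ)
    have hcast : (((n : ℤ) + 1 : ℤ) : ℂ) = ((n : ℤ) : ℂ) + 1 := by push_cast; ring
    rw [hcast, key, ih]
    have hz : g ^ ((n : ℤ) + 1) = g * g ^ (n : ℤ) := by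
      rw [add_comm, zpow_add, zpow_one]
    rw [hz, mul_inv_rev, Units.val_mul, Units.val_mul]
    simp only [mul_assoc, hgi]
  | pred n ih =>
    have key := shift ((-(n : ℤ) - 1 : ℤ) : ℂ)
    have hcast : ((-(n : ℤ) - 1 : ℤ) : ℂ) + 1 = ((-(n : ℤ) : ℤ) : ℂ) := by push_cast; ring
    rw [hcast] at key
    rw [ih] at key
    -- key : RHS(-n) = g * LHS(-n-1) * gi
    have hX : ∑ m ∈ Finset.range N,
        genBinom ((-(n:ℤ) - 1 : ℤ) : ℂ) m • (((adE ((g : L))) ^ m) v * gi ^ m)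
        = gi * (((g ^ (-(n:ℤ)) : Lˣ) : L) * v * (((g ^ (-(n:ℤ)))⁻¹ : Lˣ) : L)) * (g : L) := by
      rw [key, hgi]
      simp only [← mul_assoc, Units.inv_mul, one_mul]
      rw [mul_assoc, Units.inv_mul, mul_one]
    rw [hX]
    have hz : g ^ (-(n : ℤ) - 1) = g⁻¹ * g ^ (-(n : ℤ)) := by
      rw [sub_eq_add_neg, add_comm, zpow_add, zpow_neg_one]
    rw [hz, mul_inv_rev, inv_inv, Units.val_mul, Units.val_mul]
    simp only [mul_assoc, hgi]
end

lemma theta_aux {L : Type*} [Ring L] [Algebra ℂ L] :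
    ∀ (k : ℕ) (f : Fin k → Lˣ),
      (∀ i j, (f i : L) * (f j : L) = (f j : L) * (f i : L)) →
      ∀ (x : Fin k → ℤ) (u : L) (N : ℕ),
      (∀ i, ((adE ((f i : L))) ^ N) u = 0) →
      thetaSum f (fun i => (x i : ℂ)) N u =
        (((List.ofFn fun i => (f i) ^ (x i)).prod : Lˣ) : L) * u *
          ((((List.ofFn fun i => (f i) ^ (x i)).prod : Lˣ)⁻¹ : Lˣ) : L) := by
  intro k
  induction k with
  | zero =>
    intro f _ x u N _
    simp [thetaSum, multiAd, invPow]
  | succ k ih =>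
    intro f hcomm x u N hN
    have hU : ∀ i j, Commute (f i) (f j) := fun i j => Units.ext (by simpa using hcomm i j)
    set f' : Fin k → Lˣ := fun i => f i.succ with hf'
    set x' : Fin k → ℤ := fun i => x i.succ with hx'
    have hcomm' : ∀ i j, (f' i : L) * (f' j : L) = (f' j : L) * (f' i : L) :=
      fun i j => hcomm i.succ j.succ
    have hN' : ∀ i, ((adE ((f' i : L))) ^ N) u = 0 := fun i => hN i.succ
    have ihres := ih f' hcomm' x' u N hN'
    set F' : Lˣ := (List.ofFn fun i => (f' i) ^ (x' i)).prod with hF'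
    have hcF' : Commute (f 0) F' := by
      apply Commute.list_prod_right
      intro y hy
      rw [List.mem_ofFn] at hy
      obtain ⟨i, rfl⟩ := hy
      exact (hU 0 i.succ).zpow_right _
    have hcF'L : Commute ((f 0 : L)) ((F' : L)) := hcF'.map (Units.coeHom L)
    have hcF'invL : Commute ((f 0 : L)) ((F'⁻¹ : Lˣ) : L) :=
      (hcF'.inv_right).map (Units.coeHom L)
    have hcB' : ∀ (m' : Fin k → ℕ), Commute ((f 0 : L)) (invPow f' m') := by
      intro m'
      apply Commute.list_prod_right
      intro y hy
      rw [List.mem_ofFn] at hy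
      obtain ⟨i, rfl⟩ := hy
      exact (((hU 0 i.succ).inv_right).map (Units.coeHom L)).pow_right _
    have hcB'i : ∀ (m0 : ℕ) (m' : Fin k → ℕ),
        Commute ((((f 0)⁻¹ : Lˣ) : L) ^ m0) (invPow f' m') := by
      intro m0 m'
      apply Commute.pow_left
      apply Commute.list_prod_right
      intro y hy
      rw [List.mem_ofFn] at hy
      obtain ⟨i, rfl⟩ := hy
      exact (((hU 0 i.succ).inv_left.inv_right).map (Units.coeHom L)).pow_right _
    have split : thetaSum f (fun i => (x i : ℂ)) N u
        = ∑ m0 ∈ Finset.range N, genBinom ((x 0 : ℤ) : ℂ) m0 •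
            (((adE ((f 0 : L))) ^ m0) (thetaSum f' (fun i => (x' i : ℂ)) N u)
              * ((((f 0)⁻¹ : Lˣ) : L)) ^ m0) := by
      rw [thetaSum]
      have step1 : ∑ m ∈ Fintype.piFinset (fun _ : Fin (k+1) => Finset.range N),
            (∏ i, genBinom ((x i : ℂ)) (m i)) • (multiAd f m u * invPow f m)
          = ∑ p ∈ (Finset.range N) ×ˢ (Fintype.piFinset fun _ : Fin k => Finset.range N),
            (∏ i, genBinom ((x i : ℂ)) ((Fin.cons p.1 p.2 : Fin (k+1) → ℕ) i)) •
              (multiAd f (Fin.cons p.1 p.2 : Fin (k+1) → ℕ) u * invPow f (Fin.cons p.1 p.2 : Fin (k+1) → ℕ)) := by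
        apply Finset.sum_nbij' (i := fun m => (m 0, Fin.tail m)) (j := fun p => Fin.cons p.1 p.2)
        · intro m hm
          rw [Fintype.mem_piFinset] at hm
          exact Finset.mem_product.mpr ⟨hm 0, Fintype.mem_piFinset.mpr fun i => hm i.succ⟩
        · intro p hp
          rw [Finset.mem_product] at hp
          exact Fintype.mem_piFinset.mpr
            (fun i => Fin.cases hp.1 (fun j => Fintype.mem_piFinset.mp hp.2 j) i)
        · intro m _
          exact Fin.cons_self_tail m
        · intro p _
          simp
        · intro m _
          rw [Fin.cons_self_tail]
      rw [step1, Finset.sum_product]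
      refine Finset.sum_congr rfl fun m0 _ => ?_
      have term_eq : ∀ m' ∈ Fintype.piFinset (fun _ : Fin k => Finset.range N),
          (∏ i, genBinom ((x i : ℂ)) ((Fin.cons m0 m' : Fin (k+1) → ℕ) i)) •
              (multiAd f (Fin.cons m0 m' : Fin (k+1) → ℕ) u * invPow f (Fin.cons m0 m' : Fin (k+1) → ℕ))
          = genBinom ((x 0 : ℂ)) m0 • (((adE ((f 0 : L))) ^ m0)
              ((∏ i, genBinom ((x' i : ℂ)) (m' i)) • (multiAd f' m' u * invPow f' m'))
              * ((((f 0)⁻¹ : Lˣ) : L)) ^ m0) := by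
        intro m' _
        have hC : (∏ i, genBinom ((x i : ℂ)) ((Fin.cons m0 m' : Fin (k+1) → ℕ) i))
            = genBinom ((x 0 : ℂ)) m0 * ∏ i, genBinom ((x' i : ℂ)) (m' i) := by
          rw [Fin.prod_univ_succ]
          simp [hx']
        have hA : multiAd f (Fin.cons m0 m' : Fin (k+1) → ℕ) u
            = ((adE ((f 0 : L))) ^ m0) (multiAd f' m' u) := by
          rw [multiAd, multiAd, List.ofFn_succ, List.prod_cons]
          simp only [Fin.cons_zero, Fin.cons_succ, Module.End.mul_apply, hf']
        have hB : invPow f (Fin.cons m0 m' : Fin (k+1) → ℕ)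
            = ((((f 0)⁻¹ : Lˣ) : L)) ^ m0 * invPow f' m' := by
          rw [invPow, invPow, List.ofFn_succ, List.prod_cons]
          simp only [Fin.cons_zero, Fin.cons_succ, hf']
        rw [hC, hA, hB]
        rw [(hcB'i m0 m').eq, ← mul_assoc,
          ← adE_pow_mul_right (hcB' m') m0 (multiAd f' m' u)]
        rw [map_smul, smul_mul_assoc, smul_smul]
      rw [Finset.sum_congr rfl term_eq, ← Finset.smul_sum, ← Finset.sum_mul, ← map_sum]
      rfl
    rw [split, ihres]
    have hv' : ((adE ((f 0 : L))) ^ N) ((F' : L) * u * ((F'⁻¹ : Lˣ) : L)) = 0 := by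
      rw [adE_pow_mul_right hcF'invL, adE_pow_mul_left hcF'L, hN 0, mul_zero, zero_mul]
    rw [onevar (f 0) N _ hv' (x 0)]
    have hFtot : (List.ofFn fun i : Fin (k+1) => (f i) ^ (x i)).prod = f 0 ^ x 0 * F' := by
      rw [List.ofFn_succ, List.prod_cons, hF']
    rw [hFtot, mul_inv_rev, Units.val_mul, Units.val_mul]
    simp only [mul_assoc]


/-- for integer exponent vectors `x ∈ ℤ^k`, the generalized-binomial
formula for `Θ_F^x` (computed by its truncation at any `N` killing `u`) equals
conjugation by `f^x = f_1^{x_1} ⋯ f_k^{x_k}`. -/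
theorem theta_int_eq_conjugation {L : Type*} [Ring L] [Algebra ℂ L] (k : ℕ)
    (f : Fin k → Lˣ)
    (hcomm : ∀ i j, (f i : L) * (f j : L) = (f j : L) * (f i : L))
    (hnil : ∀ i (u : L), ∃ N : ℕ, ((adE ((f i : L))) ^ N) u = 0)
    (x : Fin k → ℤ) (u : L) (N : ℕ)
    (hN : ∀ i, ((adE ((f i : L))) ^ N) u = 0) :
    thetaSum f (fun i => (x i : ℂ)) N u =
      (((List.ofFn fun i => (f i) ^ (x i)).prod : Lˣ) : L) * u *
        ((((List.ofFn fun i => (f i) ^ (x i)).prod : Lˣ)⁻¹ : Lˣ) : L) :=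
  theta_aux k f hcomm x u N hN
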